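/- Let L be the Laplacian of a strongly connected weighted directed graph, and let Θ = diag(θ₁,...,θ_N) where θ is the positive left null vector of L normalized so that θ𝟏_N = N. Then the matrix ℒ := ΘL + LᵀΘ is symmetric positive semi-definite. -/

import Mathlib

open Matrix

def IsLaplacianOfStronglyConnectedDigraph {N : ℕ} (L : Matrix (Fin N) (Fin N) ℝ) : Prop :=
  ∃ Adj : Matrix (Fin N) (Fin N) ℝ,
    (∀ i j, 0 ≤ Adj i j) ∧ (∀ i, Adj i i = 0) ∧
    (∀ i j : Fin N, i ≠ j → Relation.TransGen (fun a b => Adj b a ≠ 0) i j) ∧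
    L = Matrix.diagonal (fun i => ∑ j, Adj i j) - Adj

/-- With `Θ = diag θ` for the positive left null vector `θ` of `L` normalized by `θ 𝟏 = N`,
the matrix `ℒ = ΘL + LᵀΘ` is symmetric positive semi-definite. -/
theorem stmt_1 {N : ℕ} (L : Matrix (Fin N) (Fin N) ℝ)
    (hL : IsLaplacianOfStronglyConnectedDigraph L)
    (θ : Fin N → ℝ) (hθpos : ∀ i, 0 < θ i) (hθL : Matrix.vecMul θ L = 0)
    (hθsum : ∑ i, θ i = (N : ℝ)) :
    (Matrix.diagonal θ * L + Lᵀ * Matrix.diagonal θ).PosSemidef := by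
  obtain ⟨A, hA0, hAd, -, hLA⟩ := hL
  set D : Fin N → ℝ := fun i => ∑ j, A i j with hD
  have hLe : ∀ i j, L i j = (if i = j then D i else 0) - A i j := by
    intro i j
    simp [hLA, Matrix.sub_apply, Matrix.diagonal_apply]
  have key : ∀ j, ∑ i, θ i * A i j = θ j * D j := by
    intro j
    have h := congrFun hθL j
    simp only [Matrix.vecMul, dotProduct, Pi.zero_apply] at h
    have h2 : ∑ i, θ i * L i j = 0 := h
    have h3 : ∑ i, (θ i * (if i = j then D i else 0) - θ i * A i j) = 0 := by
      have heq : ∑ i, (θ i * (if i = j then D i else 0) - θ i * A i j)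
          = ∑ i, θ i * L i j :=
        Finset.sum_congr rfl fun i _ => by rw [hLe]; ring
      rw [heq, h2]
    rw [Finset.sum_sub_distrib] at h3
    have h4 : ∑ i, θ i * (if i = j then D i else 0) = θ j * D j := by
      simp [Finset.sum_ite_eq' Finset.univ j]
    rw [h4] at h3
    linarith
  refine posSemidef_iff_dotProduct_mulVec.mpr ⟨?_, ?_⟩
  · have : (Matrix.diagonal θ * L + Lᵀ * Matrix.diagonal θ)ᵀ
        = Matrix.diagonal θ * L + Lᵀ * Matrix.diagonal θ := by
      rw [Matrix.transpose_add, Matrix.transpose_mul, Matrix.transpose_mul,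
        Matrix.diagonal_transpose, Matrix.transpose_transpose, add_comm]
    simpa [Matrix.IsHermitian, Matrix.conjTranspose_eq_transpose_of_trivial] using this
  · intro x
    have hstar : star x = x := by simp
    rw [hstar]
    have hQ : dotProduct x ((Matrix.diagonal θ * L + Lᵀ * Matrix.diagonal θ) *ᵥ x)
        = ∑ i, ∑ j, θ i * A i j * (x i - x j)^2 := by
      have expand : dotProduct x ((Matrix.diagonal θ * L + Lᵀ * Matrix.diagonal θ) *ᵥ x)
          = ∑ i, ∑ j, (θ i * L i j + L j i * θ j) * (x i * x j) := by
        simp only [dotProduct, Matrix.mulVec, Matrix.add_apply, Matrix.mul_apply,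
          Matrix.transpose_apply, Matrix.diagonal_apply, dotProduct]
        rw [Finset.sum_congr rfl]
        intro i _
        rw [Finset.mul_sum]
        refine Finset.sum_congr rfl fun j _ => ?_
        simp [Finset.sum_ite_eq, Finset.sum_ite_eq', Finset.mul_sum, Finset.sum_mul]
        ring
      rw [expand]
      -- symmetrize: second part equals first with i,j swapped
      have sym : ∑ i, ∑ j, (θ i * L i j + L j i * θ j) * (x i * x j)
          = 2 * ∑ i, ∑ j, θ i * L i j * (x i * x j) := by
        have : ∑ i, ∑ j, (L j i * θ j) * (x i * x j)
            = ∑ i, ∑ j, θ i * L i j * (x i * x j) := by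
          rw [Finset.sum_comm]
          refine Finset.sum_congr rfl fun i _ => Finset.sum_congr rfl fun j _ => by ring
        calc ∑ i, ∑ j, (θ i * L i j + L j i * θ j) * (x i * x j)
            = (∑ i, ∑ j, θ i * L i j * (x i * x j))
              + ∑ i, ∑ j, (L j i * θ j) * (x i * x j) := by
              rw [← Finset.sum_add_distrib]
              refine Finset.sum_congr rfl fun i _ => ?_
              rw [← Finset.sum_add_distrib]
              exact Finset.sum_congr rfl fun j _ => by ring
          _ = 2 * ∑ i, ∑ j, θ i * L i j * (x i * x j) := by rw [this]; ring
      rw [sym]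
      -- substitute L = diag D - A
      have subL : ∑ i, ∑ j, θ i * L i j * (x i * x j)
          = (∑ i, θ i * D i * (x i)^2) - ∑ i, ∑ j, θ i * A i j * (x i * x j) := by
        have : ∀ i, ∑ j, θ i * L i j * (x i * x j)
            = θ i * D i * (x i)^2 - ∑ j, θ i * A i j * (x i * x j) := by
          intro i
          have : ∑ j, θ i * L i j * (x i * x j)
              = ∑ j, (θ i * (if i = j then D i else 0) * (x i * x j)
                  - θ i * A i j * (x i * x j)) := by
            refine Finset.sum_congr rfl fun j _ => ?_
            rw [hLe]; ring
          rw [this, Finset.sum_sub_distrib]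
          congr 1
          rw [Finset.sum_eq_single i]
          · rw [if_pos rfl]; ring
          · intro j _ hj; rw [if_neg (Ne.symm hj)]; ring
          · simp
        rw [Finset.sum_congr rfl fun i _ => this i, Finset.sum_sub_distrib]
      rw [subL]
      -- expand RHS
      have T3 : ∑ i, ∑ j, θ i * A i j * (x j)^2 = ∑ i, θ i * D i * (x i)^2 := by
        rw [Finset.sum_comm]
        refine Finset.sum_congr rfl fun j _ => ?_
        rw [← Finset.sum_mul, key, hD]
      have T1 : ∑ i, ∑ j, θ i * A i j * (x i)^2 = ∑ i, θ i * D i * (x i)^2 := by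
        refine Finset.sum_congr rfl fun i _ => ?_
        rw [← Finset.sum_mul, ← Finset.mul_sum]
      have expand2 : ∑ i, ∑ j, θ i * A i j * (x i - x j)^2
          = (∑ i, ∑ j, θ i * A i j * (x i)^2)
            - 2 * (∑ i, ∑ j, θ i * A i j * (x i * x j))
            + ∑ i, ∑ j, θ i * A i j * (x j)^2 := by
        rw [Finset.mul_sum, ← Finset.sum_sub_distrib, ← Finset.sum_add_distrib]
        refine Finset.sum_congr rfl fun i _ => ?_
        rw [Finset.mul_sum, ← Finset.sum_sub_distrib, ← Finset.sum_add_distrib]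
        refine Finset.sum_congr rfl fun j _ => ?_
        ring
      rw [expand2, T1, T3]
      ring
    rw [hQ]
    refine Finset.sum_nonneg fun i _ => Finset.sum_nonneg fun j _ => ?_
    exact mul_nonneg (mul_nonneg (hθpos i).le (hA0 i j)) (sq_nonneg _)
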